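/- Let h, ω₁, ω₂ ∈ ℂ and let A and R be r×r matrix functions with A(z + 2ω₁) = A(z) and R(z + 2ω₁ + h)·A(z) = R(z) for all z at which the functions are defined, with A(z) and R(z) invertible. Define A'(z) := R(z + h) A(z) R(z)^{−1}. Then A'(z + 2ω₁ + h) = A'(z). If moreover A(z + 2ω₂) = B₂ A(z) B₂^{−1} and R(z + 2ω₂) = B₂' R(z) B₂^{−1} for constant invertible matrices B₂, B₂', then A'(z + 2ω₂) = B₂' A'(z) (B₂')^{−1}. -/
import Mathlib


open Complex Matrix

/-- The isomonodromy transformation changing the period of the elliptic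
curve: if `A(z+2ω₁) = A(z)` and `R(z+2ω₁+h)A(z) = R(z)`, then `A'(z) = R(z+h)A(z)R(z)⁻¹`
satisfies `A'(z+2ω₁+h) = A'(z)`; and if moreover `A(z+2ω₂) = B₂A(z)B₂⁻¹` and
`R(z+2ω₂) = B₂'R(z)B₂⁻¹`, then `A'(z+2ω₂) = B₂'A'(z)(B₂')⁻¹`. -/
theorem statement16 (r : ℕ) (h ω₁ ω₂ : ℂ)
    (A R : ℂ → Matrix (Fin r) (Fin r) ℂ)
    (hAper : ∀ z : ℂ, A (z + 2 * ω₁) = A z)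
    (hRA : ∀ z : ℂ, R (z + 2 * ω₁ + h) * A z = R z)
    (hAinv : ∀ z : ℂ, IsUnit (A z)) (hRinv : ∀ z : ℂ, IsUnit (R z)) :
    (∀ z : ℂ, R (z + 2 * ω₁ + h + h) * A (z + 2 * ω₁ + h) * (R (z + 2 * ω₁ + h))⁻¹ =
      R (z + h) * A z * (R z)⁻¹) ∧
    (∀ B₂ B₂' : Matrix (Fin r) (Fin r) ℂ, IsUnit B₂ → IsUnit B₂' →
      (∀ z : ℂ, A (z + 2 * ω₂) = B₂ * A z * B₂⁻¹) →
      (∀ z : ℂ, R (z + 2 * ω₂) = B₂' * R z * B₂⁻¹) →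
      ∀ z : ℂ, R (z + 2 * ω₂ + h) * A (z + 2 * ω₂) * (R (z + 2 * ω₂))⁻¹ =
        B₂' * (R (z + h) * A z * (R z)⁻¹) * B₂'⁻¹) := by
  constructor
  · intro z
    have hAd : IsUnit (A z).det := (Matrix.isUnit_iff_isUnit_det _).mp (hAinv z)
    have e1 : R (z + 2 * ω₁ + h + h) * A (z + 2 * ω₁ + h) = R (z + h) := by
      have h1 : z + 2 * ω₁ + h + h = z + h + 2 * ω₁ + h := by ring
      have h2 : z + 2 * ω₁ + h = z + h + 2 * ω₁ := by ring
      rw [h1, h2, hAper (z + h), hRA (z + h)]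
    have e2 : R (z + 2 * ω₁ + h) = R z * (A z)⁻¹ := by
      have := hRA z
      calc R (z + 2 * ω₁ + h) = R (z + 2 * ω₁ + h) * (A z * (A z)⁻¹) := by
            rw [Matrix.mul_nonsing_inv _ hAd, mul_one]
        _ = R z * (A z)⁻¹ := by rw [← mul_assoc, this]
    rw [e1, e2, Matrix.mul_inv_rev, Matrix.nonsing_inv_nonsing_inv _ hAd,
      mul_assoc]
  · intro B₂ B₂' hB hB' hA2 hR2 z
    have hBd : IsUnit B₂.det := (Matrix.isUnit_iff_isUnit_det _).mp hB
    have hR2h : R (z + 2 * ω₂ + h) = B₂' * R (z + h) * B₂⁻¹ := by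
      have h1 : z + 2 * ω₂ + h = z + h + 2 * ω₂ := by ring
      rw [h1, hR2 (z + h)]
    rw [hR2h, hA2 z, hR2 z, Matrix.mul_inv_rev, Matrix.mul_inv_rev,
      Matrix.nonsing_inv_nonsing_inv _ hBd]
    have hBB : B₂⁻¹ * B₂ = 1 := Matrix.nonsing_inv_mul _ hBd
    calc B₂' * R (z + h) * B₂⁻¹ * (B₂ * A z * B₂⁻¹) * (B₂ * ((R z)⁻¹ * B₂'⁻¹))
        = B₂' * R (z + h) * (B₂⁻¹ * B₂) * A z * (B₂⁻¹ * B₂) * ((R z)⁻¹ * B₂'⁻¹) := by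
          noncomm_ring
      _ = B₂' * (R (z + h) * A z * (R z)⁻¹) * B₂'⁻¹ := by
          rw [hBB]; noncomm_ring
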